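/- The polynomial λ₄₀(g,h) = (g² − h² − 1)·(9g⁴ − 17g²h² + 8h⁴ − 12g³ + 12gh² + 7g² − 8h² + 10g + 2) vanishes to order at least 2 (i.e., λ₄₀ and both its partial derivatives vanish) at every point (g,h) ∈ ℝ² satisfying g = 8 and 2h² = 125. -/

import Mathlib

/-- The Elkies–Kumar branch polynomial for discriminant 40. -/
noncomputable def lam40 (g h : ℝ) : ℝ :=
  (g ^ 2 - h ^ 2 - 1) *
    (9 * g ^ 4 - 17 * g ^ 2 * h ^ 2 + 8 * h ^ 4 - 12 * g ^ 3 + 12 * g * h ^ 2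
      + 7 * g ^ 2 - 8 * h ^ 2 + 10 * g + 2)

lemma hdg (g h : ℝ) : HasDerivAt (fun x => lam40 x h)
    ((2 * g) * (9 * g ^ 4 - 17 * g ^ 2 * h ^ 2 + 8 * h ^ 4 - 12 * g ^ 3 + 12 * g * h ^ 2
      + 7 * g ^ 2 - 8 * h ^ 2 + 10 * g + 2)
     + (g ^ 2 - h ^ 2 - 1) *
       (36 * g ^ 3 - 34 * g * h ^ 2 - 36 * g ^ 2 + 12 * h ^ 2 + 14 * g + 10)) g := by
  have hx := hasDerivAt_id g
  have h1 : HasDerivAt (fun x : ℝ => x ^ 2 - h ^ 2 - 1) (2 * g) g := by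
    simpa using ((hasDerivAt_pow 2 g).sub_const (h ^ 2)).sub_const 1
  have h2 : HasDerivAt (fun x : ℝ => 9 * x ^ 4 - 17 * x ^ 2 * h ^ 2 + 8 * h ^ 4 - 12 * x ^ 3
      + 12 * x * h ^ 2 + 7 * x ^ 2 - 8 * h ^ 2 + 10 * x + 2)
      (36 * g ^ 3 - 34 * g * h ^ 2 - 36 * g ^ 2 + 12 * h ^ 2 + 14 * g + 10) g := by
    have := ((((((((hasDerivAt_pow 4 g).const_mul 9).sub
        (((hasDerivAt_pow 2 g).const_mul 17).mul_const (h ^ 2))).add_const (8 * h ^ 4)).sub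
        ((hasDerivAt_pow 3 g).const_mul 12)).add
        ((hx.const_mul 12).mul_const (h ^ 2))).add
        ((hasDerivAt_pow 2 g).const_mul 7)).sub_const (8 * h ^ 2)).add (hx.const_mul 10) |>.add_const 2
    exact this.congr_deriv (by norm_num; ring)
  exact (h1.mul h2)

lemma hdh (g h : ℝ) : HasDerivAt (fun y => lam40 g y)
    ((-(2 * h)) * (9 * g ^ 4 - 17 * g ^ 2 * h ^ 2 + 8 * h ^ 4 - 12 * g ^ 3 + 12 * g * h ^ 2
      + 7 * g ^ 2 - 8 * h ^ 2 + 10 * g + 2)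
     + (g ^ 2 - h ^ 2 - 1) *
       (-34 * g ^ 2 * h + 32 * h ^ 3 + 24 * g * h - 16 * h)) h := by
  have h1 : HasDerivAt (fun y : ℝ => g ^ 2 - y ^ 2 - 1) (-(2 * h)) h := by
    simpa using (((hasDerivAt_pow 2 h).const_sub (g ^ 2)).sub_const 1)
  have h2 : HasDerivAt (fun y : ℝ => 9 * g ^ 4 - 17 * g ^ 2 * y ^ 2 + 8 * y ^ 4 - 12 * g ^ 3
      + 12 * g * y ^ 2 + 7 * g ^ 2 - 8 * y ^ 2 + 10 * g + 2)
      (-34 * g ^ 2 * h + 32 * h ^ 3 + 24 * g * h - 16 * h) h := by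
    have := (((((hasDerivAt_pow 2 h).const_mul (17 * g ^ 2)).const_sub (9 * g ^ 4)).add
        ((hasDerivAt_pow 4 h).const_mul 8)).add_const (-(12 * g ^ 3))).add
        ((hasDerivAt_pow 2 h).const_mul (12 * g)) |>.add_const (7 * g ^ 2) |>.sub
        ((hasDerivAt_pow 2 h).const_mul 8) |>.add_const (10 * g) |>.add_const 2
    exact this.congr_deriv (by norm_num; ring)
  exact (h1.mul h2)

/-- `λ₄₀` vanishes to order at least 2 (it and both partial derivatives vanish) at every
point `(g,h)` with `g = 8` and `2h² = 125`. -/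
theorem stmt_8 (g h : ℝ) (hg : g = 8) (hh : 2 * h ^ 2 = 125) :
    lam40 g h = 0 ∧ deriv (fun x => lam40 x h) g = 0 ∧ deriv (fun y => lam40 g y) h = 0 := by
  have h2 : h ^ 2 = 125 / 2 := by linarith
  refine ⟨?_, ?_, ?_⟩
  · simp only [lam40, hg]
    linear_combination (2 * (63 - h ^ 2) * (2 * h ^ 2 - 125)) * hh
  · rw [(hdg g h).deriv, hg, h2]
    linear_combination (64 * h ^ 2 + 4000) * hh
  · rw [(hdh g h).deriv, hg]
    linear_combination (-24 * h ^ 3 + 1508 * h) * hh
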